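/- Let λ > 0, c > 0, t > 0, and define F(u,t) = ∑_{k=0}^∞ (λ/(2c))^{2k} (c²t² − u²)^k / (k!)². Then ∫₀^{ct} (∂²F/∂t²)(u,t) du = (cλ/2)(e^{λt} − e^{−λt}) − cλ²t/2. -/

import Mathlib

/-- `F(u,t) = ∑_{k=0}^∞ (λ/(2c))^{2k} (c²t² − u²)^k / (k!)²`,
which equals `I₀((λ/c)√(c²t² − u²))` for `|u| ≤ ct`. -/
noncomputable def F (lam c u t : ℝ) : ℝ :=
  ∑' k : ℕ, (lam / (2 * c)) ^ (2 * k) * (c ^ 2 * t ^ 2 - u ^ 2) ^ k /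
    ((Nat.factorial k : ℝ)) ^ 2

open Real intervalIntegral MeasureTheory

noncomputable def fk (lam c u : ℝ) (k : ℕ) (s : ℝ) : ℝ :=
  (lam / (2 * c)) ^ (2 * k) * (c ^ 2 * s ^ 2 - u ^ 2) ^ k / ((Nat.factorial k : ℝ)) ^ 2

noncomputable def d1 (lam c u : ℝ) (k : ℕ) (s : ℝ) : ℝ :=
  (lam / (2 * c)) ^ (2 * k) * ((k:ℝ) * (c ^ 2 * s ^ 2 - u ^ 2) ^ (k-1) * (2*c^2*s)) /
    ((Nat.factorial k : ℝ)) ^ 2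

noncomputable def d2 (lam c u : ℝ) (k : ℕ) (s : ℝ) : ℝ :=
  (lam / (2 * c)) ^ (2 * k) *
    ((k:ℝ) * ((k-1:ℕ):ℝ) * (c ^ 2 * s ^ 2 - u ^ 2) ^ (k-1-1) * (2*c^2*s) * (2*c^2*s)
      + (k:ℝ) * (c ^ 2 * s ^ 2 - u ^ 2) ^ (k-1) * (2*c^2)) /
    ((Nat.factorial k : ℝ)) ^ 2

lemma summable_CrF (C r : ℝ) : Summable (fun k : ℕ => C * r^k / (Nat.factorial k : ℝ)) := by
  simpa [mul_div_assoc] using (Real.summable_pow_div_factorial r).mul_left C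

lemma cast_le_two_pow (k : ℕ) : (k:ℝ) ≤ 2^k := by
  calc (k:ℝ) ≤ ((2^k : ℕ) : ℝ) := by exact_mod_cast (Nat.lt_two_pow_self (n := k)).le
  _ = 2^k := by push_cast; ring

lemma g_abs_le (c u R y : ℝ) (hR : 0 ≤ R) (hy : |y| ≤ R) :
    |c^2*y^2 - u^2| ≤ c^2*R^2 + u^2 := by
  have h1 : y^2 ≤ R^2 := by nlinarith [abs_nonneg y, sq_abs y]
  rw [abs_le]
  constructor <;> nlinarith [sq_nonneg c, sq_nonneg u, sq_nonneg y, sq_nonneg (c*y)]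

lemma pow_pred_le (k : ℕ) {M : ℝ} (hM : 0 ≤ M) {g : ℝ} (hg : |g| ≤ M) (j : ℕ) (hj : j ≤ k) :
    |g|^j ≤ (M+1)^k :=
  le_trans (pow_le_pow_left₀ (abs_nonneg g) (by linarith) j)
    (pow_le_pow_right₀ (by linarith) hj)

lemma fk_bound (lam c u R : ℝ) (hR : 0 ≤ R) (k : ℕ) (y : ℝ) (hy : |y| ≤ R) :
    ‖fk lam c u k y‖ ≤ (((lam/(2*c))^2)*((c^2*R^2+u^2)+1))^k / (Nat.factorial k : ℝ) := by
  set Q := (lam/(2*c))^2 with hQdef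
  set M := c^2*R^2+u^2 with hMdef
  set g := c^2*y^2 - u^2 with hgdef
  have hQ0 : 0 ≤ Q := sq_nonneg _
  have hM0 : 0 ≤ M := by positivity
  have hg : |g| ≤ M := g_abs_le c u R y hR hy
  have hF1 : (1:ℝ) ≤ (Nat.factorial k : ℝ) := by
    exact_mod_cast Nat.one_le_iff_ne_zero.2 (Nat.factorial_ne_zero k)
  have hFpos : (0:ℝ) < (Nat.factorial k : ℝ) := by linarith
  have hFsq : (Nat.factorial k : ℝ) ≤ ((Nat.factorial k : ℝ))^2 := by nlinarith
  have hrw : ‖fk lam c u k y‖ = Q^k * |g|^k / ((Nat.factorial k : ℝ))^2 := by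
    rw [Real.norm_eq_abs, fk, pow_mul, abs_div, abs_mul, abs_pow,
      abs_of_nonneg (sq_nonneg (lam/(2*c))), abs_pow,
      abs_of_nonneg (by positivity : (0:ℝ) ≤ ((Nat.factorial k:ℝ))^2)]
  clear_value Q M g
  rw [hrw]
  calc Q^k * |g|^k / ((Nat.factorial k : ℝ))^2
      ≤ Q^k * (M+1)^k / (Nat.factorial k : ℝ) :=
        div_le_div₀ (by positivity)
          (mul_le_mul_of_nonneg_left (pow_pred_le k hM0 hg k le_rfl) (by positivity))
          hFpos hFsq
    _ = (Q*(M+1))^k / (Nat.factorial k : ℝ) := by rw [mul_pow]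

lemma d1_bound (lam c u R : ℝ) (hR : 0 ≤ R) (k : ℕ) (y : ℝ) (hy : |y| ≤ R) :
    ‖d1 lam c u k y‖ ≤ (2*c^2*R) *
      (2*((lam/(2*c))^2)*((c^2*R^2+u^2)+1))^k / (Nat.factorial k : ℝ) := by
  set Q := (lam/(2*c))^2 with hQdef
  set M := c^2*R^2+u^2 with hMdef
  set g := c^2*y^2 - u^2 with hgdef
  have hQ0 : 0 ≤ Q := sq_nonneg _
  have hM0 : 0 ≤ M := by positivity
  have hg : |g| ≤ M := g_abs_le c u R y hR hy
  have hF1 : (1:ℝ) ≤ (Nat.factorial k : ℝ) := by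
    exact_mod_cast Nat.one_le_iff_ne_zero.2 (Nat.factorial_ne_zero k)
  have hFpos : (0:ℝ) < (Nat.factorial k : ℝ) := by linarith
  have hFsq : (Nat.factorial k : ℝ) ≤ ((Nat.factorial k : ℝ))^2 := by nlinarith
  have e1 : (k:ℝ) ≤ 2^k := cast_le_two_pow k
  have e4 : |2*c^2*y| ≤ 2*c^2*R := by
    rw [abs_mul, abs_of_nonneg (by positivity : (0:ℝ) ≤ 2*c^2)]
    exact mul_le_mul_of_nonneg_left hy (by positivity)
  have hS : |(k:ℝ) * g^(k-1) * (2*c^2*y)| ≤ 2^k * (M+1)^k * (2*c^2*R) := by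
    rw [abs_mul, abs_mul, abs_pow, Nat.abs_cast]
    exact mul_le_mul (mul_le_mul e1 (pow_pred_le k hM0 hg (k-1) (by omega)) (by positivity)
      (by positivity)) e4 (abs_nonneg _) (by positivity)
  have hrw : ‖d1 lam c u k y‖ = Q^k * |(k:ℝ) * g^(k-1) * (2*c^2*y)| /
      ((Nat.factorial k : ℝ))^2 := by
    rw [Real.norm_eq_abs, d1, pow_mul, abs_div, abs_mul, abs_pow, abs_of_nonneg hQ0,
      abs_of_nonneg (by positivity : (0:ℝ) ≤ ((Nat.factorial k:ℝ))^2)]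
  clear_value Q M g
  rw [hrw]
  calc Q^k * |(k:ℝ) * g^(k-1) * (2*c^2*y)| / ((Nat.factorial k : ℝ))^2
      ≤ Q^k * (2^k * (M+1)^k * (2*c^2*R)) / (Nat.factorial k : ℝ) :=
        div_le_div₀ (by positivity) (mul_le_mul_of_nonneg_left hS (by positivity)) hFpos hFsq
    _ = (2*c^2*R) * (2*Q*(M+1))^k / (Nat.factorial k : ℝ) := by
        rw [mul_pow (2*Q) (M+1) k, mul_pow 2 Q k]; ring

lemma d2_bound (lam c u R : ℝ) (hR : 0 ≤ R) (k : ℕ) (y : ℝ) (hy : |y| ≤ R) :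
    ‖d2 lam c u k y‖ ≤ ((2*c^2*R)^2 + 2*c^2) *
      (4*((lam/(2*c))^2)*((c^2*R^2+u^2)+1))^k / (Nat.factorial k : ℝ) := by
  set Q := (lam/(2*c))^2 with hQdef
  set M := c^2*R^2+u^2 with hMdef
  set g := c^2*y^2 - u^2 with hgdef
  have hQ0 : 0 ≤ Q := sq_nonneg _
  have hM0 : 0 ≤ M := by positivity
  have hg : |g| ≤ M := g_abs_le c u R y hR hy
  have hF1 : (1:ℝ) ≤ (Nat.factorial k : ℝ) := by exact_mod_cast Nat.one_le_iff_ne_zero.2 (Nat.factorial_ne_zero k)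
  have hFpos : (0:ℝ) < (Nat.factorial k : ℝ) := by linarith
  have hFsq : (Nat.factorial k : ℝ) ≤ ((Nat.factorial k : ℝ))^2 := by nlinarith
  have e1 : (k:ℝ) ≤ 2^k := cast_le_two_pow k
  have e2 : ((k-1:ℕ):ℝ) ≤ 2^k := le_trans (by exact_mod_cast Nat.sub_le k 1) e1
  have e4 : |2*c^2*y| ≤ 2*c^2*R := by
    rw [abs_mul, abs_of_nonneg (by positivity : (0:ℝ) ≤ 2*c^2)]
    exact mul_le_mul_of_nonneg_left hy (by positivity)
  have e5 : (2:ℝ)^k * 2^k = 4^k := by rw [← mul_pow]; norm_num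
  have h1 : |(k:ℝ) * ((k-1:ℕ):ℝ) * g^(k-1-1) * (2*c^2*y) * (2*c^2*y)|
      ≤ 4^k * (M+1)^k * ((2*c^2*R) * (2*c^2*R)) := by
    rw [abs_mul, abs_mul, abs_mul, abs_mul, abs_pow, Nat.abs_cast, Nat.abs_cast]
    calc (k:ℝ) * ((k-1:ℕ):ℝ) * |g|^(k-1-1) * |2*c^2*y| * |2*c^2*y|
        ≤ 2^k * 2^k * (M+1)^k * (2*c^2*R) * (2*c^2*R) :=
          mul_le_mul (mul_le_mul (mul_le_mul (mul_le_mul e1 e2 (by positivity) (by positivity))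
            (pow_pred_le k hM0 hg (k-1-1) (by omega)) (by positivity) (by positivity)) e4
            (abs_nonneg _) (by positivity)) e4 (abs_nonneg _) (by positivity)
      _ = 4^k * (M+1)^k * ((2*c^2*R) * (2*c^2*R)) := by rw [← e5]; ring
  have h2 : |(k:ℝ) * g^(k-1) * (2*c^2)| ≤ 4^k * (M+1)^k * (2*c^2) := by
    rw [abs_mul, abs_mul, abs_pow, Nat.abs_cast,
      abs_of_nonneg (by positivity : (0:ℝ) ≤ 2*c^2)]
    have e1' : (k:ℝ) ≤ 4^k := le_trans e1 (pow_le_pow_left₀ (by norm_num) (by norm_num) k)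
    exact mul_le_mul (mul_le_mul e1' (pow_pred_le k hM0 hg (k-1) (by omega)) (by positivity)
      (by positivity)) le_rfl (by positivity) (by positivity)
  have hS : |(k:ℝ) * ((k-1:ℕ):ℝ) * g^(k-1-1) * (2*c^2*y) * (2*c^2*y)
      + (k:ℝ) * g^(k-1) * (2*c^2)| ≤ 4^k * (M+1)^k * ((2*c^2*R)^2 + 2*c^2) := by
    calc _ ≤ _ := abs_add_le _ _
    _ ≤ 4^k * (M+1)^k * ((2*c^2*R) * (2*c^2*R)) + 4^k * (M+1)^k * (2*c^2) := by
        exact add_le_add h1 h2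
    _ = 4^k * (M+1)^k * ((2*c^2*R)^2 + 2*c^2) := by ring
  have hrw : ‖d2 lam c u k y‖ = Q^k * |(k:ℝ) * ((k-1:ℕ):ℝ) * g^(k-1-1) * (2*c^2*y) * (2*c^2*y)
      + (k:ℝ) * g^(k-1) * (2*c^2)| / ((Nat.factorial k : ℝ))^2 := by
    rw [Real.norm_eq_abs, d2, pow_mul, abs_div, abs_mul, abs_pow,
      abs_of_nonneg hQ0, abs_of_nonneg (by positivity : (0:ℝ) ≤ ((Nat.factorial k:ℝ))^2)]
  clear_value Q M g
  rw [hrw]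
  calc Q^k * |_| / ((Nat.factorial k : ℝ))^2
      ≤ Q^k * (4^k * (M+1)^k * ((2*c^2*R)^2 + 2*c^2)) / (Nat.factorial k : ℝ) :=
        div_le_div₀ (by positivity) (mul_le_mul_of_nonneg_left hS (by positivity)) hFpos hFsq
    _ = ((2*c^2*R)^2 + 2*c^2) * (4*Q*(M+1))^k / (Nat.factorial k : ℝ) := by
        rw [mul_pow (4*Q) (M+1) k, mul_pow 4 Q k]; ring

lemma hg_deriv (c u y : ℝ) : HasDerivAt (fun s : ℝ => c^2*s^2 - u^2) (2*c^2*y) y := by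
  have h : HasDerivAt (fun s : ℝ => s^2) (2*y) y := by simpa using hasDerivAt_pow 2 y
  have := (h.const_mul (c^2)).sub_const (u^2)
  exact this.congr_deriv (by ring)

lemma fk_hasDeriv (lam c u : ℝ) (k : ℕ) (y : ℝ) :
    HasDerivAt (fun s => fk lam c u k s) (d1 lam c u k y) y := by
  have h := (((hg_deriv c u y).pow k).const_mul ((lam / (2*c)) ^ (2*k))).div_const
      ((Nat.factorial k : ℝ)^2)
  exact h

lemma d1_hasDeriv (lam c u : ℝ) (k : ℕ) (y : ℝ) :
    HasDerivAt (fun s => d1 lam c u k s) (d2 lam c u k y) y := by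
  have hlin : HasDerivAt (fun s : ℝ => 2*c^2*s) (2*c^2) y := by
    simpa using (hasDerivAt_id y).const_mul (2*c^2)
  have hpow := (hg_deriv c u y).pow (k-1)
  have h := ((((hpow.const_mul (k:ℝ))).mul hlin).const_mul ((lam / (2*c)) ^ (2*k))).div_const
      ((Nat.factorial k : ℝ)^2)
  exact h.congr_deriv (by simp only [d2, Pi.pow_apply]; ring)


lemma key_deriv (lam c u t : ℝ) :
    iteratedDeriv 2 (fun s => F lam c u s) t = ∑' k, d2 lam c u k t := by
  set R := |t| + 1 with hRdef
  have hR0 : 0 ≤ R := by positivity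
  have htS : t ∈ Metric.ball (0:ℝ) R := by
    simp [Metric.mem_ball, Real.dist_eq, hRdef]
  have h0S : (0:ℝ) ∈ Metric.ball (0:ℝ) R := by
    simp [Metric.mem_ball, hRdef]; positivity
  have habs : ∀ y ∈ Metric.ball (0:ℝ) R, |y| ≤ R := by
    intro y hy
    simp only [Metric.mem_ball, Real.dist_eq, sub_zero] at hy
    exact hy.le
  have hsum0 : Summable fun k => fk lam c u k 0 := by
    apply Summable.of_norm_bounded (summable_CrF 1 (((lam/(2*c))^2)*((c^2*R^2+u^2)+1)))
    intro k
    simpa [one_mul] using fk_bound lam c u R hR0 k 0 (habs 0 h0S)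
  have hsumd1_0 : Summable fun k => d1 lam c u k 0 := by
    have : (fun k => d1 lam c u k 0) = fun _ => (0:ℝ) := by
      funext k; simp [d1]
    rw [this]; exact summable_zero
  have hFd : ∀ y ∈ Metric.ball (0:ℝ) R,
      HasDerivAt (fun s => F lam c u s) (∑' k, d1 lam c u k y) y := by
    intro y hy
    exact hasDerivAt_tsum_of_isPreconnected
      (summable_CrF (2*c^2*R) (2*((lam/(2*c))^2)*((c^2*R^2+u^2)+1)))
      Metric.isOpen_ball (convex_ball 0 R).isPreconnected
      (fun k z _ => fk_hasDeriv lam c u k z)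
      (fun k z hz => d1_bound lam c u R hR0 k z (habs z hz)) h0S hsum0 hy
  have h2d : ∀ y ∈ Metric.ball (0:ℝ) R,
      HasDerivAt (fun z => ∑' k, d1 lam c u k z) (∑' k, d2 lam c u k y) y := by
    intro y hy
    exact hasDerivAt_tsum_of_isPreconnected
      (summable_CrF ((2*c^2*R)^2 + 2*c^2) (4*((lam/(2*c))^2)*((c^2*R^2+u^2)+1)))
      Metric.isOpen_ball (convex_ball 0 R).isPreconnected
      (fun k z _ => d1_hasDeriv lam c u k z)
      (fun k z hz => d2_bound lam c u R hR0 k z (habs z hz)) h0S hsumd1_0 hy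
  have hEq : deriv (fun s => F lam c u s) =ᶠ[nhds t] fun y => ∑' k, d1 lam c u k y :=
    Filter.eventuallyEq_of_mem (Metric.isOpen_ball.mem_nhds htS)
      (fun y hy => (hFd y hy).deriv)
  rw [show (2:ℕ) = 1 + 1 from rfl, iteratedDeriv_succ, iteratedDeriv_one]
  rw [hEq.deriv_eq]
  exact (h2d t htS).deriv

open intervalIntegral MeasureTheory in
lemma J_formula (b : ℝ) (m : ℕ) :
    ∫ u in (0:ℝ)..b, (b^2 - u^2)^m =
      b^(2*m+1) * 4^m * ((Nat.factorial m : ℝ))^2 / (Nat.factorial (2*m+1) : ℝ) := by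
  induction m with
  | zero => simp
  | succ m ih =>
    have hcont : ∀ j : ℕ, Continuous fun u : ℝ => (b^2 - u^2)^j := by
      intro j; fun_prop
    have hder : ∀ u : ℝ, HasDerivAt (fun u : ℝ => u * (b^2 - u^2)^(m+1))
        ((2*(m:ℝ)+3) * (b^2-u^2)^(m+1) - (2*((m:ℝ)+1)*b^2)*(b^2-u^2)^m) u := by
      intro u
      have h1 : HasDerivAt (fun u : ℝ => b^2 - u^2) (-(2*u)) u := by
        simpa using ((hasDerivAt_pow 2 u).const_sub (b^2))
      have h2 := (hasDerivAt_id u).mul (h1.pow (m+1))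
      simp only [id_eq] at h2
      refine h2.congr_deriv ?_
      simp only [Pi.pow_apply]
      rw [show m + 1 - 1 = m from rfl, pow_succ (b^2 - u^2) m]
      push_cast
      ring
    have h0 : ∫ u in (0:ℝ)..b,
        ((2*(m:ℝ)+3) * (b^2-u^2)^(m+1) - (2*((m:ℝ)+1)*b^2)*(b^2-u^2)^m) = 0 := by
      rw [integral_eq_sub_of_hasDerivAt (fun u _ => hder u)]
      · simp
      · apply Continuous.intervalIntegrable; fun_prop
    rw [integral_sub (((hcont (m+1)).intervalIntegrable _ _).const_mul _)
        (((hcont m).intervalIntegrable _ _).const_mul _),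
        intervalIntegral.integral_const_mul, intervalIntegral.integral_const_mul, ih, sub_eq_zero] at h0
    have hne : (2*(m:ℝ)+3) ≠ 0 := by positivity
    have hfac1 : (Nat.factorial (2*(m+1)+1) : ℝ)
        = (2*(m:ℝ)+3) * (2*(m:ℝ)+2) * (Nat.factorial (2*m+1) : ℝ) := by
      rw [show 2*(m+1)+1 = (2*m+1)+1+1 by omega]
      push_cast [Nat.factorial_succ]
      ring
    have hfac2 : (Nat.factorial (m+1) : ℝ) = ((m:ℝ)+1) * (Nat.factorial m : ℝ) := by
      push_cast [Nat.factorial_succ]; ring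
    have hfacpos : (0:ℝ) < (Nat.factorial (2*m+1) : ℝ) := by
      exact_mod_cast Nat.factorial_pos _
    have key : ∫ u in (0:ℝ)..b, (b^2-u^2)^(m+1)
        = (2*((m:ℝ)+1))*b^2*(b^(2*m+1) * 4^m * ((Nat.factorial m : ℝ))^2
            / (Nat.factorial (2*m+1) : ℝ)) / (2*(m:ℝ)+3) := by
      field_simp at h0 ⊢
      linarith [h0]
    rw [key, hfac1, hfac2]
    rw [show 2*(m+1)+1 = 2*m+1+2 by omega, show m+1 = m+1 from rfl]
    field_simp
    ring

lemma int_d2_zero (lam c t : ℝ) : ∫ u in (0:ℝ)..(c*t), d2 lam c u 0 t = 0 := by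
  simp [d2]

lemma int_d2_one (lam c t : ℝ) (hc : c ≠ 0) :
    ∫ u in (0:ℝ)..(c*t), d2 lam c u 1 t = c*lam^2*t/2 := by
  have hrw : ∀ u : ℝ, d2 lam c u 1 t = lam^2/2 := by
    intro u
    simp [d2]
    field_simp
  simp only [hrw]
  rw [intervalIntegral.integral_const]
  simp
  ring

lemma int_d2_succ (lam c t : ℝ) (hc : c ≠ 0) (m : ℕ) :
    ∫ u in (0:ℝ)..(c*t), d2 lam c u (m+2) t
      = c*lam*(lam*t)^(2*m+3)/(Nat.factorial (2*m+3) : ℝ) := by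
  set C1 : ℝ := (lam/(2*c))^(2*(m+2)) * (((m:ℝ)+2)*(((m:ℝ)+1)*(2*c^2*t)*(2*c^2*t)))
      / ((Nat.factorial (m+2):ℝ))^2 with hC1
  set C2 : ℝ := (lam/(2*c))^(2*(m+2)) * (((m:ℝ)+2)*(2*c^2))
      / ((Nat.factorial (m+2):ℝ))^2 with hC2
  have hrw : ∀ u : ℝ, d2 lam c u (m+2) t
      = C1 * ((c*t)^2 - u^2)^m + C2 * ((c*t)^2 - u^2)^(m+1) := by
    intro u
    rw [hC1, hC2]
    simp only [d2, show m+2-1 = m+1 from rfl, show m+1-1 = m from rfl]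
    have hbase : c^2*t^2 - u^2 = (c*t)^2 - u^2 := by ring
    rw [hbase]
    push_cast
    ring
  simp only [hrw]
  rw [integral_add ((Continuous.intervalIntegrable (by fun_prop) _ _))
      ((Continuous.intervalIntegrable (by fun_prop) _ _)),
    intervalIntegral.integral_const_mul, intervalIntegral.integral_const_mul,
    J_formula, J_formula]
  rw [hC1, hC2, show 2*(m+1)+1 = 2*m+3 by omega]
  have hf1 : (Nat.factorial (m+2):ℝ) = ((m:ℝ)+2)*(((m:ℝ)+1)*(Nat.factorial m : ℝ)) := by
    rw [show m+2 = m+1+1 from rfl]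
    push_cast [Nat.factorial_succ]
    ring
  have hf2 : (Nat.factorial (m+1):ℝ) = ((m:ℝ)+1)*(Nat.factorial m:ℝ) := by
    push_cast [Nat.factorial_succ]; ring
  have hf3 : (Nat.factorial (2*m+3):ℝ)
      = (2*(m:ℝ)+3)*((2*(m:ℝ)+2)*(Nat.factorial (2*m+1):ℝ)) := by
    rw [show 2*m+3 = 2*m+1+1+1 by omega]
    push_cast [Nat.factorial_succ]
    ring
  have hd : (lam/(2*c))^(2*(m+2)) = lam^(2*(m+2)) / (4^(m+2) * c^(2*(m+2))) := by
    rw [div_pow, mul_pow, pow_mul 2 2 (m+2)]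
    norm_num
  have hmp1 : (lam*t)^(2*m+3) = lam^(2*m+3)*t^(2*m+3) := mul_pow _ _ _
  have hmp2 : (c*t)^(2*m+1) = c^(2*m+1)*t^(2*m+1) := mul_pow _ _ _
  have hmp3 : (c*t)^(2*m+3) = c^(2*m+3)*t^(2*m+3) := mul_pow _ _ _
  rw [hf1, hf2, hf3, hd, hmp1, hmp2, hmp3]
  have hfm : (Nat.factorial m : ℝ) ≠ 0 := by exact_mod_cast Nat.factorial_ne_zero m
  have hfm2 : (Nat.factorial (2*m+1) : ℝ) ≠ 0 := by exact_mod_cast Nat.factorial_ne_zero _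
  have h4 : (4:ℝ)^(m+2) ≠ 0 := by positivity
  have hcp : (c:ℝ)^(2*(m+2)) ≠ 0 := pow_ne_zero _ hc
  field_simp
  ring

lemma summable_sinh_series (x : ℝ) :
    Summable (fun n : ℕ => x^(2*n+1)/((Nat.factorial (2*n+1)):ℝ)) := by
  apply Summable.of_norm_bounded ((Real.summable_pow_div_factorial (x^2)).mul_left |x|)
  intro n
  have hx : ‖x^(2*n+1)/((Nat.factorial (2*n+1)):ℝ)‖
      = |x|^(2*n+1) / ((Nat.factorial (2*n+1)):ℝ) := by
    rw [Real.norm_eq_abs, abs_div, abs_pow, Nat.abs_cast]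
  rw [hx]
  have hnum : |x|^(2*n+1) = |x| * (x^2)^n := by
    rw [pow_succ, pow_mul, sq_abs]; ring
  rw [hnum, mul_div_assoc]
  apply mul_le_mul_of_nonneg_left _ (abs_nonneg x)
  apply div_le_div₀ (by positivity) le_rfl
    (by exact_mod_cast Nat.factorial_pos n)
    (by exact_mod_cast Nat.factorial_le (by omega : n ≤ 2*n+1))

lemma rhs_eval (lam c t : ℝ) :
    c*lam^2*t/2 + ∑' n : ℕ, c*lam*(lam*t)^(2*n+3)/(Nat.factorial (2*n+3):ℝ)
      = c*lam/2*(Real.exp (lam*t) - Real.exp (-(lam*t))) - c*lam^2*t/2 := by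
  have hsinh := summable_sinh_series (lam*t)
  have h1 : c*lam/2*(Real.exp (lam*t) - Real.exp (-(lam*t)))
      = c*lam*Real.sinh (lam*t) := by rw [Real.sinh_eq]; ring
  rw [h1, Real.sinh_eq_tsum, hsinh.tsum_eq_zero_add]
  have hidx : ∀ n : ℕ, 2*(n+1)+1 = 2*n+3 := fun n => by omega
  simp only [hidx]
  simp_rw [mul_div_assoc]
  rw [tsum_mul_left]
  norm_num [Nat.factorial]
  ring

theorem integral_d2F_dt2
    (lam c t : ℝ) (hlam : 0 < lam) (hc : 0 < c) (ht : 0 < t) :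
    ∫ u in (0 : ℝ)..(c * t), iteratedDeriv 2 (fun s => F lam c u s) t =
      c * lam / 2 * (Real.exp (lam * t) - Real.exp (-(lam * t))) - c * lam ^ 2 * t / 2 := by
  have hct : (0:ℝ) ≤ c * t := by positivity
  simp only [key_deriv]
  set R := |t| + 1 with hR
  have hR0 : 0 ≤ R := by positivity
  have htR : |t| ≤ R := by simp [hR]
  set Q := (lam/(2*c))^2 with hQ
  have hQ0 : 0 ≤ Q := sq_nonneg _
  set M' := c^2*R^2 + (c*t)^2 with hM'
  have hM'0 : 0 ≤ M' := by positivity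
  have hcont : ∀ k, Continuous fun u : ℝ => d2 lam c u k t := by
    intro k; unfold d2; fun_prop
  have hint : ∀ k, IntegrableOn (fun u => d2 lam c u k t) (Set.Ioc 0 (c*t)) :=
    fun k => (hcont k).integrableOn_Ioc
  have hbd : ∀ k, ∀ u ∈ Set.Ioc (0:ℝ) (c*t), ‖d2 lam c u k t‖
      ≤ ((2*c^2*R)^2 + 2*c^2) * (4*Q*(M'+1))^k / (Nat.factorial k : ℝ) := by
    intro k u hu
    refine (d2_bound lam c u R hR0 k t htR).trans ?_
    have h2 : u^2 ≤ (c*t)^2 := by nlinarith [hu.1, hu.2]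
    have hbase : 4*Q*((c^2*R^2+u^2)+1) ≤ 4*Q*(M'+1) := by
      rw [hM']; nlinarith [hQ0]
    have := pow_le_pow_left₀ (by positivity) hbase k
    apply div_le_div₀ (by positivity) (mul_le_mul_of_nonneg_left this (by positivity))
      (by exact_mod_cast Nat.factorial_pos k) le_rfl
  have hsumnorm : Summable fun k => ∫ u in Set.Ioc (0:ℝ) (c*t), ‖d2 lam c u k t‖ := by
    apply Summable.of_nonneg_of_le
      (fun k => integral_nonneg (fun u => norm_nonneg _))
      (fun k => ?_)
      ((summable_CrF ((2*c^2*R)^2 + 2*c^2) (4*Q*(M'+1))).mul_left (c*t))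
    calc ∫ u in Set.Ioc (0:ℝ) (c*t), ‖d2 lam c u k t‖
        ≤ ∫ _u in Set.Ioc (0:ℝ) (c*t),
            ((2*c^2*R)^2 + 2*c^2) * (4*Q*(M'+1))^k / (Nat.factorial k : ℝ) :=
          setIntegral_mono_on ((hint k).norm)
            (integrableOn_const measure_Ioc_lt_top.ne) measurableSet_Ioc (hbd k)
      _ = (c*t) * (((2*c^2*R)^2 + 2*c^2) * (4*Q*(M'+1))^k / (Nat.factorial k : ℝ)) := by
          rw [setIntegral_const, Real.volume_real_Ioc, smul_eq_mul]
          rw [sub_zero, max_eq_left hct]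
  rw [intervalIntegral.integral_of_le hct,
    ← MeasureTheory.integral_tsum_of_summable_integral_norm (fun k => hint k) hsumnorm]
  have hIoc : ∀ k, (∫ u in Set.Ioc (0:ℝ) (c*t), d2 lam c u k t)
      = ∫ u in (0:ℝ)..(c*t), d2 lam c u k t :=
    fun k => (intervalIntegral.integral_of_le hct).symm
  have hs2 : Summable fun k => ∫ u in Set.Ioc (0:ℝ) (c*t), d2 lam c u k t :=
    Summable.of_norm_bounded hsumnorm (fun k => norm_integral_le_integral_norm _)
  rw [tsum_congr hIoc]
  have hs3 : Summable fun k => ∫ u in (0:ℝ)..(c*t), d2 lam c u k t := by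
    apply hs2.congr; intro k; exact hIoc k
  rw [hs3.tsum_eq_zero_add, ((summable_nat_add_iff 1).2 hs3).tsum_eq_zero_add]
  have hsucc : ∀ n : ℕ, (∫ u in (0:ℝ)..(c*t), d2 lam c u (n+1+1) t)
      = c*lam*(lam*t)^(2*n+3)/(Nat.factorial (2*n+3) : ℝ) :=
    fun n => int_d2_succ lam c t hc.ne' n
  simp only [hsucc]
  rw [int_d2_zero, int_d2_one lam c t hc.ne', zero_add, rhs_eval]
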